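/- Suppose the real sequences (x_j(t)) satisfy x_k'(t) = Σ'_{j≠k} 2/(x_k(t) - x_j(t)) with x_{-j}(t) = -x_j(t), all x_j(t) distinct and nonzero. Then x₁'(t) = 1/x₁(t) - f(t)·x₁(t), where f(t) = Σ'_{j≠±1} 2/((x_{-1}(t) - x_j(t))·(x_1(t) - x_j(t))). -/

import Mathlib

theorem stmt_11 (I : Set ℝ) (hI : IsOpen I) (x : ℤ → ℝ → ℝ)
    (hanti : ∀ j : ℤ, ∀ t : ℝ, x (-j) t = -x j t)
    (hdist : ∀ t ∈ I, ∀ i j : ℤ, i ≠ 0 → j ≠ 0 → i ≠ j → x i t ≠ x j t)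
    (hne : ∀ j : ℤ, j ≠ 0 → ∀ t ∈ I, x j t ≠ 0)
    (hsum : ∀ k : ℤ, k ≠ 0 → ∀ t ∈ I,
      Summable (fun j : {j : ℤ // j ≠ 0 ∧ j ≠ k} => 2 / (x k t - x j.1 t)))
    (hode : ∀ k : ℤ, k ≠ 0 → ∀ t ∈ I,
      HasDerivAt (x k) (∑' j : {j : ℤ // j ≠ 0 ∧ j ≠ k}, 2 / (x k t - x j.1 t)) t)
    (hfsum : ∀ t ∈ I, Summable (fun j : {j : ℤ // j ≠ 0 ∧ j ≠ 1 ∧ j ≠ -1} =>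
      2 / ((x (-1) t - x j.1 t) * (x 1 t - x j.1 t)))) :
    ∀ t ∈ I, HasDerivAt (x 1)
      (1 / x 1 t -
        (∑' j : {j : ℤ // j ≠ 0 ∧ j ≠ 1 ∧ j ≠ -1},
          2 / ((x (-1) t - x j.1 t) * (x 1 t - x j.1 t))) * x 1 t) t := by
  intro t ht
  have h1 := hode 1 one_ne_zero t ht
  have ha0 : x 1 t ≠ 0 := hne 1 one_ne_zero t ht
  have hm1 : x (-1) t = -x 1 t := hanti 1 t
  set a := x 1 t with ha
  set A : Set ℤ := {j | j ≠ 0 ∧ j ≠ 1} with hA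
  set B : Set ℤ := {j | j ≠ 0 ∧ j ≠ 1 ∧ j ≠ -1} with hB
  set g : ℤ → ℝ := fun j => 2 / (a - x j t) with hg
  set h : ℤ → ℝ := fun j => 2 / ((x (-1) t - x j t) * (a - x j t)) with hh
  have hBA : B ⊆ A := fun j hj => ⟨hj.1, hj.2.1⟩
  have hsg : Summable (A.indicator g) := by
    rw [← summable_subtype_iff_indicator]
    exact hsum 1 one_ne_zero t ht
  have hsh : Summable (B.indicator h) := by
    rw [← summable_subtype_iff_indicator]
    exact hfsum t ht
  -- nonvanishing of denominators for j ∈ B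
  have hd1 : ∀ j ∈ B, a - x j t ≠ 0 := by
    intro j hj
    exact sub_ne_zero.mpr (hdist t ht 1 j one_ne_zero hj.1 (Ne.symm hj.2.1))
  have hd2 : ∀ j ∈ B, a + x j t ≠ 0 := by
    intro j hj
    have : x 1 t ≠ x (-j) t := by
      refine hdist t ht 1 (-j) one_ne_zero (neg_ne_zero.mpr hj.1) ?_
      have := hj.2.2; omega
    rw [hanti j t] at this
    intro hc; apply this; linarith [hc]
  -- rewrite tsums over subtypes as tsums of indicators
  have e1 : (∑' j : {j : ℤ // j ≠ 0 ∧ j ≠ 1}, 2 / (x 1 t - x j.1 t))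
      = ∑' j : ℤ, A.indicator g j := tsum_subtype A g
  have e2 : (∑' j : {j : ℤ // j ≠ 0 ∧ j ≠ 1 ∧ j ≠ -1},
        2 / ((x (-1) t - x j.1 t) * (x 1 t - x j.1 t)))
      = ∑' j : ℤ, B.indicator h j := tsum_subtype B h
  -- split off j = -1
  have hs1 : Summable (({-1} : Set ℤ).indicator g) := by
    apply summable_of_ne_finset_zero (s := ({-1} : Finset ℤ))
    intro j hj
    exact Set.indicator_of_notMem (by simpa using hj) g
  have hsgB : Summable (B.indicator g) := by
    have := hsg.indicator B
    rwa [Set.indicator_indicator, Set.inter_eq_left.mpr hBA] at this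
  have hsplit : A.indicator g = fun j => ({-1} : Set ℤ).indicator g j + B.indicator g j := by
    funext j
    by_cases hj : j = -1
    · subst hj; simp [Set.indicator, hA, hB]
    · by_cases hj0 : j = 0
      · subst hj0; simp [Set.indicator, hA, hB]
      · by_cases hj1 : j = 1
        · subst hj1; simp [Set.indicator, hA, hB]
        · simp [Set.indicator, hA, hB, hj, hj0, hj1]
  have esing : ∑' j : ℤ, ({-1} : Set ℤ).indicator g j = 1 / a := by
    rw [tsum_eq_single (-1) (fun b hb => Set.indicator_of_notMem (by simpa using hb) g)]
    rw [Set.indicator_of_mem (Set.mem_singleton _) g]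
    rw [hg]
    simp only [hm1, sub_neg_eq_add]
    rw [div_eq_div_iff (by intro hc; exact ha0 (by linarith)) ha0]
    ring
  -- symmetrization of the remaining sum
  set F : ℤ → ℝ := fun j => B.indicator g j with hF
  have hFneg : Summable (fun j : ℤ => F (-j)) :=
    hsgB.comp_injective neg_injective
  have hBsym : ∀ j : ℤ, j ∈ B ↔ -j ∈ B := by
    intro j; constructor <;> (intro hj; refine ⟨?_, ?_, ?_⟩ <;> [skip; skip; skip]) <;>
      · have h1 := hj.1; have h2 := hj.2.1; have h3 := hj.2.2; omega
  have hpair : ∀ j : ℤ, F j + F (-j) = (-2 * a) * B.indicator h j := by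
    intro j
    by_cases hj : j ∈ B
    · have hjn : -j ∈ B := (hBsym j).mp hj
      show B.indicator g j + B.indicator g (-j) = (-2 * a) * B.indicator h j
      rw [Set.indicator_of_mem hj, Set.indicator_of_mem hjn,
        Set.indicator_of_mem hj, hg, hh]
      simp only [hanti j t, hm1]
      have d1 := hd1 j hj
      have d2 := hd2 j hj
      have dm : -a - x j t ≠ 0 := by intro hc; exact d2 (by linarith)
      have d2' : a - -x j t ≠ 0 := by rwa [sub_neg_eq_add]
      rw [div_add_div _ _ d1 d2', mul_div_assoc',
        div_eq_div_iff (mul_ne_zero d1 d2') (mul_ne_zero dm d1)]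
      ring
    · have hjn : -j ∉ B := fun hc => hj ((hBsym j).mpr hc)
      show B.indicator g j + B.indicator g (-j) = (-2 * a) * B.indicator h j
      rw [Set.indicator_of_notMem hj, Set.indicator_of_notMem hjn,
        Set.indicator_of_notMem hj]
      ring
  have hneg_tsum : ∑' j : ℤ, F (-j) = ∑' j : ℤ, F j := by
    have := (Equiv.neg ℤ).tsum_eq F
    simpa using this
  have hdouble : ∑' j : ℤ, (F j + F (-j)) = 2 * ∑' j : ℤ, F j := by
    rw [Summable.tsum_add hsgB hFneg, hneg_tsum]; ring
  have hsum2 : ∑' j : ℤ, (F j + F (-j)) = (-2 * a) * ∑' j : ℤ, B.indicator h j := by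
    rw [tsum_congr hpair, tsum_mul_left]
  have key : ∑' j : ℤ, F j = (-a) * ∑' j : ℤ, B.indicator h j := by
    have := hdouble.symm.trans hsum2
    linarith
  -- put everything together
  have hval : (∑' j : {j : ℤ // j ≠ 0 ∧ j ≠ 1}, 2 / (x 1 t - x j.1 t))
      = 1 / a - (∑' j : {j : ℤ // j ≠ 0 ∧ j ≠ 1 ∧ j ≠ -1},
          2 / ((x (-1) t - x j.1 t) * (x 1 t - x j.1 t))) * a := by
    rw [e1, e2, hsplit, Summable.tsum_add hs1 hsgB, esing]
    have : ∑' j : ℤ, B.indicator g j = ∑' j : ℤ, F j := rfl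
    rw [this, key]; ring
  rwa [hval] at h1
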